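/- Let m1, m2, n1 ≥ 0 and define ¹T(m1,m2,n1) as the set of (a,b,c,d,e) ∈ Z_+^5 with a+b+c+d+e ≤ n1, c ≤ 1, b+e−d ≤ m2, e ≤ m2, a−2b+2d−e ≤ m1, c+2d−e ≤ m1. Then the map (a,b,c,d,e) ↦ (a,b,c,d,e+1) is an injection from ¹T(m1+1, m2−1, n1−1) into ¹T(m1,m2,n1) (assuming m2,n1 ≥ 1), whose image is exactly the set of points with e > 0. -/
import Mathlib


/-- The slice ¹T^G of the Littelmann-type set for G2 (f = 0); components
of p are (a,b,c,d,e). -/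
def T1G (m1 m2 n1 : ℤ) : Set (ℤ × ℤ × ℤ × ℤ × ℤ) :=
  {p | 0 ≤ p.1 ∧ 0 ≤ p.2.1 ∧ 0 ≤ p.2.2.1 ∧ 0 ≤ p.2.2.2.1 ∧ 0 ≤ p.2.2.2.2 ∧
    p.1 + p.2.1 + p.2.2.1 + p.2.2.2.1 + p.2.2.2.2 ≤ n1 ∧ p.2.2.1 ≤ 1 ∧
    p.2.1 + p.2.2.2.2 - p.2.2.2.1 ≤ m2 ∧ p.2.2.2.2 ≤ m2 ∧
    p.1 - 2 * p.2.1 + 2 * p.2.2.2.1 - p.2.2.2.2 ≤ m1 ∧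
    p.2.2.1 + 2 * p.2.2.2.1 - p.2.2.2.2 ≤ m1}

/-- (a,b,c,d,e) ↦ (a,b,c,d,e+1) is an injection
¹T(m1+1, m2-1, n1-1) → ¹T(m1,m2,n1) with image the points with e > 0. -/
theorem stmt_14 (m1 m2 n1 : ℤ) (hm1 : 0 ≤ m1) (hm2 : 1 ≤ m2) (hn1 : 1 ≤ n1) :
    Set.InjOn
      (fun p : ℤ × ℤ × ℤ × ℤ × ℤ => (p.1, p.2.1, p.2.2.1, p.2.2.2.1, p.2.2.2.2 + 1))
      (T1G (m1 + 1) (m2 - 1) (n1 - 1)) ∧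
    (fun p : ℤ × ℤ × ℤ × ℤ × ℤ => (p.1, p.2.1, p.2.2.1, p.2.2.2.1, p.2.2.2.2 + 1)) ''
        (T1G (m1 + 1) (m2 - 1) (n1 - 1)) =
      {p ∈ T1G m1 m2 n1 | 0 < p.2.2.2.2} := by
  constructor
  · rintro ⟨a,b,c,d,e⟩ _ ⟨a',b',c',d',e'⟩ _ h
    simp only [Prod.mk.injEq] at h
    obtain ⟨h1,h2,h3,h4,h5⟩ := h
    refine Prod.ext h1 (Prod.ext h2 (Prod.ext h3 (Prod.ext h4 ?_)))
    simp only at h5 ⊢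
    omega
  · ext ⟨a,b,c,d,e⟩
    simp only [Set.mem_image, Set.mem_setOf_eq, T1G, Prod.mk.injEq]
    constructor
    · rintro ⟨⟨a',b',c',d',e'⟩, hp, h1,h2,h3,h4,h5⟩
      simp only [T1G, Set.mem_setOf_eq] at hp
      obtain ⟨p1,p2,p3,p4,p5,p6,p7,p8,p9,p10,p11⟩ := hp
      simp only at h1 h2 h3 h4 h5 p1 p2 p3 p4 p5 p6 p7 p8 p9 p10 p11
      subst h1 h2 h3 h4
      refine ⟨⟨?_,?_,?_,?_,?_,?_,?_,?_,?_,?_,?_⟩,?_⟩ <;> omega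
    · rintro ⟨⟨p1,p2,p3,p4,p5,p6,p7,p8,p9,p10,p11⟩, he⟩
      refine ⟨(a,b,c,d,e-1), ?_, ?_⟩
      · simp only [T1G, Set.mem_setOf_eq]
        omega
      · simp only [Prod.mk.injEq, sub_add_cancel, and_self, true_and]
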